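/- Let n, d be positive integers with gcd(n,d) = 1, and let r be an integer with n + d - nd ≤ r ≤ n and n ≡ r (mod d). Then modulo Φ_n(q)^4, one has (q^r;q^d)_{(n-r)/d} · (q^{n+d};q^d)_{(n-r)/d} / (q^d;q^d)_{(n-r)/d}^2 ≡ (-1)^{(n-r)/d} q^{(n-r)(n-d+r)/(2d)} · (1 - ([n]^2 + [n]^3(1-q)) · Σ_{k=1}^{(n-r)/d} q^{kd}/[kd]^2), where the congruence is between rational functions whose denominators are coprime to Φ_n(q). -/

import Mathlib

open Finset Polynomial

/-- The indeterminate `q`, as a rational function over `ℚ`. -/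
noncomputable def q : RatFunc ℚ := RatFunc.X

/-- The q-shifted factorial `(q^r; q^d)_m = ∏_{j=0}^{m-1} (1 - q^{r+dj})`. -/
noncomputable def qPoch (r d : ℤ) (m : ℕ) : RatFunc ℚ :=
  ∏ j ∈ Finset.range m, (1 - q ^ (r + d * (j : ℤ)))

/-- The q-integer `[m] = (1-q^m)/(1-q)`. -/
noncomputable def qint (m : ℤ) : RatFunc ℚ := (1 - q ^ m) / (1 - q)

/-- Congruence of rational functions modulo a polynomial `P`: the difference can be
written with numerator divisible by `P` and denominator coprime to `P`. -/
def modCong (A B : RatFunc ℚ) (P : Polynomial ℚ) : Prop :=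
  ∃ c e : Polynomial ℚ, IsCoprime e P ∧
    A - B = algebraMap (Polynomial ℚ) (RatFunc ℚ) (P * c) /
            algebraMap (Polynomial ℚ) (RatFunc ℚ) e

/-- The q-integer `[n]` as a polynomial: `1 + q + ⋯ + q^{n-1}`. -/
noncomputable def qintPoly (n : ℕ) : Polynomial ℚ := ∑ i ∈ Finset.range n, Polynomial.X ^ i

/- ### Auxiliary machinery -/

noncomputable abbrev AM : Polynomial ℚ →+* RatFunc ℚ := algebraMap (Polynomial ℚ) (RatFunc ℚ)

lemma q_eq : q = AM Polynomial.X := (RatFunc.algebraMap_X (K := ℚ)).symm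

lemma hq0 : q ≠ 0 := by rw [q]; exact RatFunc.X_ne_zero

lemma q_pow_nat (m : ℕ) : q ^ (m : ℤ) = AM (Polynomial.X ^ m) := by
  rw [zpow_natCast, q_eq, map_pow]

lemma one_sub_q_pow (m : ℕ) : (1 : RatFunc ℚ) - q ^ (m : ℤ) = AM (1 - Polynomial.X ^ m) := by
  rw [map_sub, map_one, q_pow_nat]

lemma one_sub_X_pow_ne (m : ℕ) (hm : 0 < m) : (1 - Polynomial.X ^ m : Polynomial ℚ) ≠ 0 := by
  intro h
  have := congrArg (fun p => Polynomial.coeff p m) h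
  simp [Polynomial.coeff_one, hm.ne'] at this

lemma one_sub_q_pow_ne (m : ℕ) (hm : 0 < m) : (1 : RatFunc ℚ) - q ^ (m : ℤ) ≠ 0 := by
  rw [one_sub_q_pow]
  exact fun h => one_sub_X_pow_ne m hm (RatFunc.algebraMap_injective ℚ (by simpa using h))

/-- `A` can be written with denominator coprime to `Φ_n`. -/
def Nice (n : ℕ) (A : RatFunc ℚ) : Prop :=
  ∃ p e : Polynomial ℚ, IsCoprime e (cyclotomic n ℚ) ∧ A = AM p / AM e

lemma cop_ne_zero {n : ℕ} (hn : 0 < n) {e : Polynomial ℚ}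
    (h : IsCoprime e (cyclotomic n ℚ)) : e ≠ 0 := by
  rintro rfl
  exact (cyclotomic.irreducible_rat hn).not_isUnit (isCoprime_zero_left.mp h)

lemma nice_poly {n : ℕ} (p : Polynomial ℚ) : Nice n (AM p) :=
  ⟨p, 1, isCoprime_one_left, by simp⟩

lemma nice_zero {n : ℕ} : Nice n 0 := by simpa using nice_poly (n := n) 0

lemma nice_mul {n : ℕ} {A B : RatFunc ℚ} : Nice n A → Nice n B → Nice n (A * B) := by
  rintro ⟨p1, e1, h1, rfl⟩ ⟨p2, e2, h2, rfl⟩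
  exact ⟨p1 * p2, e1 * e2, h1.mul_left h2, by rw [div_mul_div_comm, map_mul, map_mul]⟩

lemma nice_add {n : ℕ} (hn : 0 < n) {A B : RatFunc ℚ} : Nice n A → Nice n B → Nice n (A + B) := by
  rintro ⟨p1, e1, h1, rfl⟩ ⟨p2, e2, h2, rfl⟩
  refine ⟨p1 * e2 + p2 * e1, e1 * e2, h1.mul_left h2, ?_⟩
  have he1 : AM e1 ≠ 0 := fun h =>
    cop_ne_zero hn h1 (RatFunc.algebraMap_injective ℚ (by simpa using h))
  have he2 : AM e2 ≠ 0 := fun h =>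
    cop_ne_zero hn h2 (RatFunc.algebraMap_injective ℚ (by simpa using h))
  rw [div_add_div _ _ he1 he2, map_add, map_mul, map_mul, map_mul]
  ring_nf

lemma nice_neg {n : ℕ} {A : RatFunc ℚ} : Nice n A → Nice n (-A) := by
  rintro ⟨p, e, h, rfl⟩
  exact ⟨-p, e, h, by rw [map_neg, neg_div]⟩

lemma nice_sub {n : ℕ} (hn : 0 < n) {A B : RatFunc ℚ} (hA : Nice n A) (hB : Nice n B) :
    Nice n (A - B) := by
  rw [sub_eq_add_neg]; exact nice_add hn hA (nice_neg hB)

lemma nice_sum {n : ℕ} (hn : 0 < n) {ι : Type*} (S : Finset ι) (f : ι → RatFunc ℚ)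
    (hf : ∀ i ∈ S, Nice n (f i)) : Nice n (∑ i ∈ S, f i) := by
  classical
  induction S using Finset.induction_on with
  | empty => simpa using nice_zero
  | @insert x S hx ih =>
    rw [Finset.sum_insert hx]
    exact nice_add hn (hf _ (Finset.mem_insert_self _ _))
      (ih fun i hi => hf i (Finset.mem_insert_of_mem hi))

lemma nice_inv_am {n : ℕ} {e : Polynomial ℚ} (h : IsCoprime e (cyclotomic n ℚ)) :
    Nice n (AM e)⁻¹ := ⟨1, e, h, by rw [map_one, one_div]⟩

lemma nice_div {n : ℕ} {A : RatFunc ℚ} {e : Polynomial ℚ} (hA : Nice n A)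
    (h : IsCoprime e (cyclotomic n ℚ)) : Nice n (A / AM e) := by
  rw [div_eq_mul_inv]; exact nice_mul hA (nice_inv_am h)

lemma cop_X {n : ℕ} (hn : 1 < n) : IsCoprime (Polynomial.X : Polynomial ℚ) (cyclotomic n ℚ) := by
  refine ⟨-(cyclotomic n ℚ).divX, 1, ?_⟩
  have h0 : (cyclotomic n ℚ).coeff 0 = 1 := cyclotomic_coeff_zero ℚ hn
  have := Polynomial.X_mul_divX_add (cyclotomic n ℚ)
  rw [h0, map_one] at this
  linear_combination -this

lemma cop_one_sub_X_pow {n : ℕ} (hn : 0 < n) {m : ℕ} (hm : ¬ n ∣ m) :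
    IsCoprime (1 - Polynomial.X ^ m : Polynomial ℚ) (cyclotomic n ℚ) := by
  refine (((cyclotomic.irreducible_rat hn).coprime_iff_not_dvd).mpr ?_).symm
  intro hdvd
  have hdvd' : cyclotomic n ℚ ∣ Polynomial.X ^ m - 1 := by
    rw [← dvd_neg] at hdvd; rwa [neg_sub] at hdvd
  have hmap : cyclotomic n ℂ ∣ (Polynomial.X ^ m - 1 : Polynomial ℂ) := by
    have := Polynomial.map_dvd (algebraMap ℚ ℂ) hdvd'
    simpa [Polynomial.map_cyclotomic] using this
  set ζ := Complex.exp (2 * Real.pi * Complex.I / n)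
  have hζ : IsPrimitiveRoot ζ n := Complex.isPrimitiveRoot_exp n hn.ne'
  have hroot : (Polynomial.X ^ m - 1 : Polynomial ℂ).IsRoot ζ :=
    (hζ.isRoot_cyclotomic hn).dvd hmap
  have hζm : ζ ^ m = 1 := by
    have := hroot
    simp only [Polynomial.IsRoot, Polynomial.eval_sub, Polynomial.eval_pow,
      Polynomial.eval_X, Polynomial.eval_one, sub_eq_zero] at this
    exact this
  exact hm ((hζ.pow_eq_one_iff_dvd m).mp hζm)

lemma nice_zpow {n : ℕ} (hn : 1 < n) (m : ℤ) : Nice n (q ^ m) := by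
  obtain ⟨k, rfl | rfl⟩ := Int.eq_nat_or_neg m
  · exact ⟨Polynomial.X ^ k, 1, isCoprime_one_left, by rw [q_pow_nat, map_one, div_one]⟩
  · refine ⟨1, Polynomial.X ^ k, (cop_X hn).pow_left, ?_⟩
    rw [zpow_neg, q_pow_nat, map_one, one_div]

lemma nice_neg_one_pow {n : ℕ} (s : ℕ) : Nice n ((-1 : RatFunc ℚ) ^ s) := by
  have : ((-1 : RatFunc ℚ)) ^ s = AM ((-1) ^ s) := by
    rw [map_pow, map_neg, map_one]
  rw [this]; exact nice_poly _

lemma prod_neg_zpow (e : ℕ → ℤ) (s : ℕ) :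
    ∏ j ∈ range s, (-(q ^ e j)) = (-1) ^ s * q ^ (∑ j ∈ range s, e j) := by
  induction s with
  | zero => simp
  | succ s ih =>
    rw [Finset.prod_range_succ, Finset.sum_range_succ, ih, zpow_add₀ hq0]
    ring

lemma sum_Icc_one {M : Type*} [AddCommMonoid M] (f : ℕ → M) (s : ℕ) :
    ∑ k ∈ Icc 1 s, f k = ∑ j ∈ range s, f (j + 1) := by
  induction s with
  | zero => simp
  | succ s ih => rw [Finset.sum_Icc_succ_top (by omega), Finset.sum_range_succ, ih]

lemma gauss (s : ℕ) : (∑ j ∈ range s, ((j : ℤ) + 1)) * 2 = (s : ℤ) * ((s : ℤ) + 1) := by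
  induction s with
  | zero => simp
  | succ s ih =>
    rw [Finset.sum_range_succ, add_mul, ih]
    push_cast
    ring

lemma term_L (N M : ℤ) (hM : (1 : RatFunc ℚ) - q ^ M ≠ 0) :
    (1 - q ^ (N - M)) * (1 - q ^ (N + M)) / (1 - q ^ M) ^ 2
      = (-(q ^ (N - M))) * (1 - (1 - q ^ N) ^ 2 * (q ^ (M - N) / (1 - q ^ M) ^ 2)) := by
  rw [zpow_sub₀ hq0, zpow_add₀ hq0, zpow_sub₀ hq0]
  have hx : q ^ N ≠ 0 := zpow_ne_zero _ hq0
  have hy : q ^ M ≠ 0 := zpow_ne_zero _ hq0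
  field_simp
  ring

lemma term_R (N M : ℤ) (hM : (1 : RatFunc ℚ) - q ^ M ≠ 0) (h1 : (1 : RatFunc ℚ) - q ≠ 0) :
    (((1 - q ^ N) / (1 - q)) ^ 2 + ((1 - q ^ N) / (1 - q)) ^ 3 * (1 - q)) *
        (q ^ M / ((1 - q ^ M) / (1 - q)) ^ 2)
      = ((1 - q ^ N) ^ 2 - (1 - q ^ N) ^ 4) * (q ^ (M - N) / (1 - q ^ M) ^ 2) := by
  rw [zpow_sub₀ hq0]
  have hx : q ^ N ≠ 0 := zpow_ne_zero _ hq0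
  field_simp
  ring

lemma expand_prod (n : ℕ) (hn : 0 < n) (t : RatFunc ℚ) (ht : Nice n t) (s : ℕ)
    (a : ℕ → RatFunc ℚ) (ha : ∀ j, j < s → Nice n (a j)) :
    ∃ G, Nice n G ∧
      ∏ j ∈ range s, (1 - t ^ 2 * a j) = 1 - t ^ 2 * (∑ j ∈ range s, a j) + t ^ 4 * G := by
  induction s with
  | zero => exact ⟨0, nice_zero, by simp⟩
  | succ s ih =>
    obtain ⟨G, hG, hP⟩ := ih (fun j hj => ha j (by omega))
    have has : Nice n (a s) := ha s (by omega)
    refine ⟨(∑ j ∈ range s, a j) * a s + G - t * t * (G * a s), ?_, ?_⟩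
    · exact nice_sub hn
        (nice_add hn
          (nice_mul (nice_sum hn _ _ (fun i hi => ha i (by simp at hi; omega))) has) hG)
        (nice_mul (nice_mul ht ht) (nice_mul hG has))
    · rw [Finset.prod_range_succ, hP, Finset.sum_range_succ]
      ring
noncomputable def aex (n d : ℕ) (j : ℕ) : RatFunc ℚ :=
  q ^ (((j : ℤ) + 1) * d - n) / (1 - q ^ (((j : ℤ) + 1) * d)) ^ 2

lemma hMnat (d j : ℕ) : ((j : ℤ) + 1) * d = (((j + 1) * d : ℕ) : ℤ) := by push_cast; ring

lemma hu (d : ℕ) (hd : 0 < d) (j : ℕ) : (1 : RatFunc ℚ) - q ^ (((j : ℤ) + 1) * d) ≠ 0 := by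
  rw [hMnat]; exact one_sub_q_pow_ne _ (by positivity)

lemma nice_aex (n d : ℕ) (hn : 1 < n) (hd : 0 < d) (j : ℕ) (hj : ¬ n ∣ (j + 1) * d) :
    Nice n (aex n d j) := by
  rw [aex]
  have h2 : (1 - q ^ (((j : ℤ) + 1) * d)) ^ 2
      = AM ((1 - Polynomial.X ^ ((j + 1) * d)) ^ 2) := by
    rw [map_pow, ← one_sub_q_pow, hMnat]
  rw [h2]
  exact nice_div (nice_zpow hn _) ((cop_one_sub_X_pow (by omega) hj).pow_left)

theorem stmt2 (n d : ℕ) (hn : 0 < n) (hd : 0 < d) (hnd : Nat.gcd n d = 1) (r : ℤ)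
    (hr1 : (n : ℤ) + d - n * d ≤ r) (hr2 : r ≤ (n : ℤ))
    (hmod : (n : ℤ) ≡ r [ZMOD (d : ℤ)]) :
    modCong
      (qPoch r d (((n : ℤ) - r) / d).toNat * qPoch ((n : ℤ) + d) d (((n : ℤ) - r) / d).toNat /
        (qPoch d d (((n : ℤ) - r) / d).toNat) ^ 2)
      ((-1) ^ (((n : ℤ) - r) / d).toNat * q ^ ((((n : ℤ) - r) * ((n : ℤ) - d + r)) / (2 * d)) *
        (1 - ((qint n) ^ 2 + (qint n) ^ 3 * (1 - q)) *
          ∑ k ∈ Finset.Icc 1 (((n : ℤ) - r) / d).toNat, q ^ (k * d) / (qint (k * d)) ^ 2))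
      ((Polynomial.cyclotomic n ℚ) ^ 4) := by
  rcases Nat.lt_or_ge n 2 with hn1 | hn'
  · -- n = 1
    have h1 : n = 1 := by omega
    subst h1
    have hr : r = 1 := by push_cast at hr1 hr2; omega
    subst hr
    refine ⟨0, 1, isCoprime_one_left, ?_⟩
    norm_num [qPoch]
  · have hd0 : (0 : ℤ) < (d : ℤ) := by exact_mod_cast hd
    have hdvd : (d : ℤ) ∣ (n : ℤ) - r := (dvd_sub_comm).mp hmod.dvd
    set s : ℕ := (((n : ℤ) - r) / (d : ℤ)).toNat with hs_def
    have hnr : (0 : ℤ) ≤ (n : ℤ) - r := by omega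
    have hcast : ((s : ℤ)) = ((n : ℤ) - r) / d := by
      rw [hs_def]; exact Int.toNat_of_nonneg (Int.ediv_nonneg hnr hd0.le)
    have hsd : (n : ℤ) - r = (s : ℤ) * (d : ℤ) := by
      rw [hcast]; exact (Int.ediv_mul_cancel hdvd).symm
    have hs_le : (s : ℤ) ≤ (n : ℤ) - 1 := by
      have h1 : (s : ℤ) * d ≤ (n : ℤ) * d - d := by linarith [hsd, hr1]
      nlinarith
    have hs_lt : ∀ j, j < s → ¬ (n ∣ (j + 1) * d) := by
      intro j hj hdvdn
      have hco : Nat.Coprime n d := hnd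
      have h2 : n ∣ j + 1 := hco.dvd_of_dvd_mul_right hdvdn
      have h3 := Nat.le_of_dvd (by omega) h2
      omega
    -- rewrite the three Pochhammer products
    have e1 : qPoch r d s = ∏ j ∈ range s, (1 - q ^ ((n : ℤ) - ((j : ℤ) + 1) * d)) := by
      rw [qPoch]
      conv_rhs => rw [← Finset.prod_range_reflect]
      refine Finset.prod_congr rfl fun j hj => ?_
      have hj' : j < s := Finset.mem_range.mp hj
      have hc : ((s - 1 - j : ℕ) : ℤ) = (s : ℤ) - 1 - (j : ℤ) := by omega
      have hexp : r + (d : ℤ) * (j : ℤ) = (n : ℤ) - (((s - 1 - j : ℕ) : ℤ) + 1) * d := by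
        rw [hc]; linear_combination (-1 : ℤ) * hsd
      rw [hexp]
    have e2 : qPoch ((n : ℤ) + d) d s = ∏ j ∈ range s, (1 - q ^ ((n : ℤ) + ((j : ℤ) + 1) * d)) := by
      rw [qPoch]
      refine Finset.prod_congr rfl fun j hj => ?_
      congr 1
      ring
    have e3 : qPoch d d s = ∏ j ∈ range s, (1 - q ^ (((j : ℤ) + 1) * d)) := by
      rw [qPoch]
      refine Finset.prod_congr rfl fun j hj => ?_
      congr 1
      ring
    have hL : qPoch r d s * qPoch ((n : ℤ) + d) d s / (qPoch d d s) ^ 2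
        = (-1) ^ s * q ^ (∑ j ∈ range s, ((n : ℤ) - ((j : ℤ) + 1) * d)) *
          ∏ j ∈ range s, (1 - (1 - q ^ ((n : ℤ))) ^ 2 * aex n d j) := by
      rw [e1, e2, e3, ← Finset.prod_mul_distrib, ← Finset.prod_pow, ← Finset.prod_div_distrib]
      rw [show (∏ j ∈ range s, ((1 - q ^ ((n : ℤ) - ((j : ℤ) + 1) * d)) *
              (1 - q ^ ((n : ℤ) + ((j : ℤ) + 1) * d)) / (1 - q ^ (((j : ℤ) + 1) * d)) ^ 2))
          = ∏ j ∈ range s, ((-(q ^ ((n : ℤ) - ((j : ℤ) + 1) * d))) *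
              (1 - (1 - q ^ ((n : ℤ))) ^ 2 * aex n d j)) from
        Finset.prod_congr rfl fun j hj => by rw [aex]; exact term_L _ _ (hu d hd j)]
      rw [Finset.prod_mul_distrib, prod_neg_zpow]
    have hsum_split : ∑ j ∈ range s, ((n : ℤ) - ((j : ℤ) + 1) * d)
        = (s : ℤ) * n - d * (∑ j ∈ range s, ((j : ℤ) + 1)) := by
      rw [Finset.sum_sub_distrib, Finset.sum_const, Finset.card_range, ← Finset.sum_mul]
      push_cast
      ring
    have hE : (((n : ℤ) - r) * ((n : ℤ) - d + r)) / (2 * (d : ℤ))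
        = ∑ j ∈ range s, ((n : ℤ) - ((j : ℤ) + 1) * d) := by
      have hnum : (((n : ℤ)) - r) * ((n : ℤ) - d + r)
          = (2 * (d : ℤ)) * ((s : ℤ) * n - d * (∑ j ∈ range s, ((j : ℤ) + 1))) := by
        linear_combination ((n : ℤ) - d + r - (s : ℤ) * d) * hsd + (d : ℤ) ^ 2 * gauss s
      rw [hnum, Int.mul_ediv_cancel_left _ (by positivity), hsum_split]
    have h1q : (1 : RatFunc ℚ) - q ≠ 0 := by
      have := one_sub_q_pow_ne 1 one_pos
      simpa using this
    have hRsum : ((qint n) ^ 2 + (qint n) ^ 3 * (1 - q)) *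
          (∑ k ∈ Icc 1 s, q ^ (k * d) / (qint (k * d)) ^ 2)
        = ((1 - q ^ ((n : ℤ))) ^ 2 - (1 - q ^ ((n : ℤ))) ^ 4) * ∑ j ∈ range s, aex n d j := by
      rw [sum_Icc_one (fun k => q ^ (k * d) / (qint (k * d)) ^ 2) s, Finset.mul_sum,
        Finset.mul_sum]
      refine Finset.sum_congr rfl fun j hj => ?_
      simp only [aex, qint]
      have hc1 : ((j : ℤ) + 1) * (d : ℤ) = (((j + 1) : ℕ) : ℤ) * (d : ℤ) := by push_cast; ring
      have hc2 : q ^ ((j + 1) * d) = q ^ (((j : ℤ) + 1) * (d : ℤ)) := by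
        rw [hMnat, zpow_natCast]
      rw [hc1] at *
      rw [hc2, hc1]
      exact term_R _ _ (by rw [← hc1]; exact hu d hd j) h1q
    obtain ⟨G, hGnice, hGeq⟩ := expand_prod n hn (1 - q ^ ((n : ℤ)))
      (by rw [one_sub_q_pow n]; exact nice_poly _) s (aex n d)
      (fun j hj => nice_aex n d hn' hd j (hs_lt j hj))
    have hD : qPoch r d s * qPoch ((n : ℤ) + d) d s / (qPoch d d s) ^ 2 -
          ((-1) ^ s * q ^ ((((n : ℤ) - r) * ((n : ℤ) - d + r)) / (2 * d)) *
            (1 - ((qint n) ^ 2 + (qint n) ^ 3 * (1 - q)) *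
              ∑ k ∈ Finset.Icc 1 s, q ^ (k * d) / (qint (k * d)) ^ 2))
        = (1 - q ^ ((n : ℤ))) ^ 4 *
            ((-1) ^ s * q ^ (∑ j ∈ range s, ((n : ℤ) - ((j : ℤ) + 1) * d)) *
              (G - ∑ j ∈ range s, aex n d j)) := by
      rw [hL, hE, hRsum, hGeq]
      ring
    have hH : Nice n ((-1) ^ s * q ^ (∑ j ∈ range s, ((n : ℤ) - ((j : ℤ) + 1) * d)) *
        (G - ∑ j ∈ range s, aex n d j)) := by
      refine nice_mul (nice_mul (nice_neg_one_pow s) (nice_zpow hn' _))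
        (nice_sub hn hGnice (nice_sum hn _ _ fun j hj => ?_))
      exact nice_aex n d hn' hd j (hs_lt j (Finset.mem_range.mp hj))
    obtain ⟨p, e, hcop, hHeq⟩ := hH
    obtain ⟨w, hw⟩ : cyclotomic n ℚ ∣ (1 - Polynomial.X ^ n : Polynomial ℚ) := by
      have h := cyclotomic.dvd_X_pow_sub_one n ℚ
      have h2 : cyclotomic n ℚ ∣ -(Polynomial.X ^ n - 1 : Polynomial ℚ) := dvd_neg.mpr h
      rwa [neg_sub] at h2
    refine ⟨w ^ 4 * p, e, hcop.pow_right, ?_⟩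
    rw [hD, hHeq]
    rw [show (1 - q ^ ((n : ℤ))) ^ 4 = AM ((1 - Polynomial.X ^ n) ^ 4) by
      rw [map_pow, one_sub_q_pow]]
    rw [hw, mul_pow]
    simp only [map_mul]
    ring
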